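/- Let (Ω, F, P) be a probability space, g : Ω → ℝ a measurable function bounded above by M > 0, h ≥ 0 a real number, ε ∈ (0,1), and δ ≥ εM/(1-ε). If P{ω : g(ω) + δ ≤ h} ≥ 1 - ε, then E[g] ≤ h. -/

import Mathlib

open MeasureTheory

theorem stmt_0 {Ω : Type*} [MeasurableSpace Ω] (P : Measure Ω) [IsProbabilityMeasure P]
    (g : Ω → ℝ) (hg_meas : Measurable g) (hg_int : Integrable g P)
    (M : ℝ) (hM : 0 < M) (hgM : ∀ ω, g ω ≤ M)
    (h : ℝ) (hh : 0 ≤ h)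
    (ε : ℝ) (hε : ε ∈ Set.Ioo (0:ℝ) 1)
    (δ : ℝ) (hδ : δ ≥ ε * M / (1 - ε))
    (hP : P {ω | g ω + δ ≤ h} ≥ ENNReal.ofReal (1 - ε)) :
    ∫ ω, g ω ∂P ≤ h := by
  obtain ⟨hε0, hε1⟩ := hε
  have h1ε : (0:ℝ) < 1 - ε := by linarith
  have hδ0 : 0 ≤ δ := le_trans (by positivity) hδ
  have hδε : ε * M ≤ δ * (1 - ε) := by
    rw [ge_iff_le, div_le_iff₀ h1ε] at hδ
    linarith
  set E : Set Ω := {ω | g ω + δ ≤ h} with hE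
  have hEm : MeasurableSet E := measurableSet_le (by fun_prop) measurable_const
  -- real-valued measures
  set p : ℝ := (P E).toReal with hp
  have hPE : P E ≠ ⊤ := measure_ne_top _ _
  have hp1 : p ≤ 1 := by
    have := measure_mono (μ := P) (Set.subset_univ E)
    simpa [hp] using ENNReal.toReal_mono (by simp) this
  have hplb : 1 - ε ≤ p := by
    have := ENNReal.toReal_mono hPE hP
    simpa [ENNReal.toReal_ofReal h1ε.le] using this
  have hpc : (P Eᶜ).toReal = 1 - p := by
    have := measure_compl hEm (measure_ne_top P E)
    rw [this]
    rw [ENNReal.toReal_sub_of_le (measure_mono (μ := P) (Set.subset_univ E)) (by simp)]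
    simp [hp]
  have hint1 : ∫ ω in E, g ω ∂P ≤ (h - δ) * p := by
    have : ∫ ω in E, g ω ∂P ≤ ∫ _ω in E, (h - δ) ∂P := by
      apply setIntegral_mono_on hg_int.integrableOn (integrableOn_const (measure_ne_top _ _)) hEm
      intro ω hω
      have : g ω + δ ≤ h := hω
      linarith
    simpa [mul_comm, hp, Measure.real] using this
  have hint2 : ∫ ω in Eᶜ, g ω ∂P ≤ M * (1 - p) := by
    have : ∫ ω in Eᶜ, g ω ∂P ≤ ∫ _ω in Eᶜ, M ∂P := by
      apply setIntegral_mono_on hg_int.integrableOn (integrableOn_const (measure_ne_top _ _)) hEm.compl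
      exact fun ω _ => hgM ω
    simpa [hpc, mul_comm, Measure.real] using this
  have hsplit : ∫ ω, g ω ∂P = ∫ ω in E, g ω ∂P + ∫ ω in Eᶜ, g ω ∂P :=
    (integral_add_compl hEm hg_int).symm
  rw [hsplit]
  have hfinal : (h - δ) * p + M * (1 - p) ≤ h := by nlinarith
  linarith
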